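/- Local average potential outcomes under one-sided noncompliance, part III: under Assumptions 1, 2 and 4, E[Y(0,0) · 1_{NT_i ∩ NT_j}] = E[Y · (1−D_i)(1−D_j) | Z_i=1, Z_j=1] and P[NT_i ∩ NT_j] = E[(1−D_i)(1−D_j) | Z_i=1, Z_j=1], where 1_A denotes the indicator of the event A. -/

import Mathlib

open MeasureTheory ProbabilityTheory

noncomputable def bInd (b : Bool) : ℝ := if b then 1 else 0

lemma bInd_meas : Measurable bInd := measurable_of_countable _

/-- If `f` is independent of `(Zi, Zj)` and integrable, its integral under the
conditional measure on `{Zi = true} ∩ {Zj = true}` equals its integral under `P`. -/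
lemma cond_integral_eq
    {Ω : Type*} [MeasurableSpace Ω] (P : Measure Ω) [IsProbabilityMeasure P]
    (f : Ω → ℝ) (Zi Zj : Ω → Bool)
    (hZi : Measurable Zi) (hZj : Measurable Zj)
    (hf : Integrable f P)
    (hind : IndepFun f (fun ω => (Zi ω, Zj ω)) P)
    (hpos : 0 < P ({x | Zi x = true} ∩ {x | Zj x = true})) :
    (∫ ω, f ω ∂(P[|({x | Zi x = true} ∩ {x | Zj x = true})])) = ∫ ω, f ω ∂P := by
  set s : Set Ω := {x | Zi x = true} ∩ {x | Zj x = true} with hs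
  have hsm : MeasurableSet s :=
    (hZi (measurableSet_singleton true)).inter (hZj (measurableSet_singleton true))
  have hPs_ne_top : P s ≠ ⊤ := measure_ne_top _ _
  have hPs_ne : (P s).toReal ≠ 0 := by
    simp [ENNReal.toReal_ne_zero, hpos.ne', hPs_ne_top]
  -- the indicator of s as a function of (Zi, Zj)
  set χ : Ω → ℝ := fun ω => if (Zi ω = true ∧ Zj ω = true) then 1 else 0 with hχ
  have hχcomp : χ = (fun p : Bool × Bool => if (p.1 = true ∧ p.2 = true) then (1:ℝ) else 0)
      ∘ (fun ω => (Zi ω, Zj ω)) := rfl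
  have hindχ : IndepFun f χ P := by
    rw [hχcomp]
    exact hind.comp measurable_id (measurable_of_countable _)
  have hχint : Integrable χ P := by
    have : χ = s.indicator (fun _ => (1:ℝ)) := by
      funext ω
      by_cases h : ω ∈ s
      · simp only [hχ, Set.indicator_of_mem h]
        have h1 : Zi ω = true := h.1
        have h2 : Zj ω = true := h.2
        simp [h1, h2]
      · simp only [hχ, Set.indicator_of_notMem h]
        have : ¬ (Zi ω = true ∧ Zj ω = true) := h
        simp [this]
    rw [this]
    exact (integrable_const (1:ℝ)).indicator hsm
  have hmul : ∫ ω, f ω * χ ω ∂P = (∫ ω, f ω ∂P) * ∫ ω, χ ω ∂P :=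
    hindχ.integral_fun_mul_eq_mul_integral hf.aestronglyMeasurable hχint.aestronglyMeasurable
  have hχint_val : ∫ ω, χ ω ∂P = (P s).toReal := by
    have : χ = s.indicator (fun _ => (1:ℝ)) := by
      funext ω
      by_cases h : ω ∈ s
      · have h1 : Zi ω = true := h.1
        have h2 : Zj ω = true := h.2
        simp [hχ, Set.indicator_of_mem h, h1, h2]
      · have hn : ¬ (Zi ω = true ∧ Zj ω = true) := h
        simp [hχ, Set.indicator_of_notMem h, hn]
    rw [this, integral_indicator hsm]
    simp
    rfl
  have hrestrict : ∫ ω in s, f ω ∂P = ∫ ω, f ω * χ ω ∂P := by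
    rw [← integral_indicator hsm]
    congr 1
    funext ω
    by_cases h : ω ∈ s
    · have h1 : Zi ω = true := h.1
      have h2 : Zj ω = true := h.2
      simp [hχ, Set.indicator_of_mem h, h1, h2]
    · have hn : ¬ (Zi ω = true ∧ Zj ω = true) := h
      simp [hχ, Set.indicator_of_notMem h, hn]
  rw [ProbabilityTheory.cond, integral_smul_measure, ENNReal.toReal_inv, hrestrict, hmul,
    hχint_val]
  simp only [smul_eq_mul]
  field_simp

theorem stmt_8
    {Ω : Type*} [MeasurableSpace Ω] (P : Measure Ω) [IsProbabilityMeasure P]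
    (Y : Bool → Bool → Ω → ℝ) (Di Dj : Bool → Bool → Ω → Bool)
    (Zi Zj : Ω → Bool)
    (hYmeas : ∀ d d', Measurable (Y d d'))
    (hYint : ∀ d d', Integrable (Y d d') P)
    (hDimeas : ∀ z z', Measurable (Di z z'))
    (hDjmeas : ∀ z z', Measurable (Dj z z'))
    (hZi : Measurable Zi) (hZj : Measurable Zj)
    (hpos : ∀ z z', 0 < P ({x | Zi x = z} ∩ {x | Zj x = z'}))
    (hIV : IndepFun
      (fun ω => ((fun d d' => Y d d' ω),
                 (fun z z' => Di z z' ω),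
                 (fun z z' => Dj z z' ω)))
      (fun ω => (Zi ω, Zj ω)) P)
    (hmono : ∀ᵐ ω ∂P,
      (Di false false ω ≤ Di false true ω ∧ Di false true ω ≤ Di true false ω ∧
        Di true false ω ≤ Di true true ω) ∧
      (Dj false false ω ≤ Dj false true ω ∧ Dj false true ω ≤ Dj true false ω ∧
        Dj true false ω ≤ Dj true true ω))
    (hosn : ∀ᵐ ω ∂P,
      Di false false ω = false ∧ Di false true ω = false ∧
      Dj false false ω = false ∧ Dj false true ω = false)
    :
    (∫ ω, Y false false ω * Set.indicator ({x | Di true true x = false} ∩ {x | Dj true true x = false}) (fun _ => (1:ℝ)) ω ∂P)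
      = (∫ ω, (Y (Di (Zi ω) (Zj ω) ω) (Dj (Zj ω) (Zi ω) ω) ω) * (1 - bInd (Di (Zi ω) (Zj ω) ω)) * (1 - bInd (Dj (Zj ω) (Zi ω) ω)) ∂(P[|({x | Zi x = true} ∩ {x | Zj x = true})]))
    ∧ (P ({x | Di true true x = false} ∩ {x | Dj true true x = false})).toReal = (∫ ω, (1 - bInd (Di (Zi ω) (Zj ω) ω)) * (1 - bInd (Dj (Zj ω) (Zi ω) ω)) ∂(P[|({x | Zi x = true} ∩ {x | Zj x = true})])) := by
  set s : Set Ω := {x | Zi x = true} ∩ {x | Zj x = true} with hs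
  have hsm : MeasurableSet s :=
    (hZi (measurableSet_singleton true)).inter (hZj (measurableSet_singleton true))
  set NT : Set Ω := {x | Di true true x = false} ∩ {x | Dj true true x = false} with hNT
  have hNTm : MeasurableSet NT :=
    ((hDimeas true true) (measurableSet_singleton false)).inter
      ((hDjmeas true true) (measurableSet_singleton false))
  -- the two "latent" functions
  set f : Ω → ℝ := fun ω =>
    Y false false ω * (1 - bInd (Di true true ω)) * (1 - bInd (Dj true true ω)) with hf
  set g : Ω → ℝ := fun ω =>
    (1 - bInd (Di true true ω)) * (1 - bInd (Dj true true ω)) with hg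
  have hprod_ind : ∀ ω, (1 - bInd (Di true true ω)) * (1 - bInd (Dj true true ω))
      = NT.indicator (fun _ => (1:ℝ)) ω := by
    intro ω
    by_cases h : ω ∈ NT
    · have h1 : Di true true ω = false := h.1
      have h2 : Dj true true ω = false := h.2
      simp [bInd, h1, h2, Set.indicator_of_mem h]
    · have hor : Di true true ω = true ∨ Dj true true ω = true := by
        by_contra hc
        push_neg at hc
        exact h ⟨Bool.eq_false_iff.mpr hc.1, Bool.eq_false_iff.mpr hc.2⟩
      rcases hor with h1 | h1 <;>
        simp [bInd, h1, Set.indicator_of_notMem h]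
  have hf_eq : f = fun ω => Y false false ω * NT.indicator (fun _ => (1:ℝ)) ω := by
    funext ω
    show Y false false ω * (1 - bInd (Di true true ω)) * (1 - bInd (Dj true true ω)) = _
    rw [mul_assoc, hprod_ind ω]
  have hg_eq : g = NT.indicator (fun _ => (1:ℝ)) := by
    funext ω; exact hprod_ind ω
  -- integrability
  have hf_int : Integrable f P := by
    rw [hf_eq]
    have : (fun ω => Y false false ω * NT.indicator (fun _ => (1:ℝ)) ω)
        = NT.indicator (Y false false) := by
      funext ω
      by_cases h : ω ∈ NT
      · simp [Set.indicator_of_mem h]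
      · simp [Set.indicator_of_notMem h]
    rw [this]
    exact (hYint false false).indicator hNTm
  have hg_int : Integrable g P := by
    rw [hg_eq]; exact (integrable_const (1:ℝ)).indicator hNTm
  -- independence of f, g from (Zi, Zj)
  have hDi_eval : Measurable fun p : (Bool → Bool → ℝ) × (Bool → Bool → Bool) × (Bool → Bool → Bool) =>
      p.2.1 true true :=
    (measurable_pi_apply true).comp ((measurable_pi_apply true).comp
      (measurable_fst.comp measurable_snd))
  have hDj_eval : Measurable fun p : (Bool → Bool → ℝ) × (Bool → Bool → Bool) × (Bool → Bool → Bool) =>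
      p.2.2 true true :=
    (measurable_pi_apply true).comp ((measurable_pi_apply true).comp
      (measurable_snd.comp measurable_snd))
  have hY_eval : Measurable fun p : (Bool → Bool → ℝ) × (Bool → Bool → Bool) × (Bool → Bool → Bool) =>
      p.1 false false :=
    (measurable_pi_apply false).comp ((measurable_pi_apply false).comp measurable_fst)
  have hFf : Measurable fun p : (Bool → Bool → ℝ) × (Bool → Bool → Bool) × (Bool → Bool → Bool) =>
      p.1 false false * (1 - bInd (p.2.1 true true)) * (1 - bInd (p.2.2 true true)) :=
    ((hY_eval.mul (measurable_const.sub (bInd_meas.comp hDi_eval))).mul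
      (measurable_const.sub (bInd_meas.comp hDj_eval)))
  have hFg : Measurable fun p : (Bool → Bool → ℝ) × (Bool → Bool → Bool) × (Bool → Bool → Bool) =>
      (1 - bInd (p.2.1 true true)) * (1 - bInd (p.2.2 true true)) :=
    (measurable_const.sub (bInd_meas.comp hDi_eval)).mul
      (measurable_const.sub (bInd_meas.comp hDj_eval))
  have hIndf : IndepFun f (fun ω => (Zi ω, Zj ω)) P := hIV.comp hFf measurable_id
  have hIndg : IndepFun g (fun ω => (Zi ω, Zj ω)) P := hIV.comp hFg measurable_id
  have hkeyf := cond_integral_eq P f Zi Zj hZi hZj hf_int hIndf (hpos true true)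
  have hkeyg := cond_integral_eq P g Zi Zj hZi hZj hg_int hIndg (hpos true true)
  have hPs_ne_top : P s ≠ ⊤ := measure_ne_top _ _
  -- the observed integrands equal f resp. g on s
  have hcong : ∀ ω ∈ s,
      (Y (Di (Zi ω) (Zj ω) ω) (Dj (Zj ω) (Zi ω) ω) ω) * (1 - bInd (Di (Zi ω) (Zj ω) ω))
        * (1 - bInd (Dj (Zj ω) (Zi ω) ω)) = f ω := by
    intro ω hω
    have h1 : Zi ω = true := hω.1
    have h2 : Zj ω = true := hω.2
    rw [h1, h2]
    show _ = Y false false ω * (1 - bInd (Di true true ω)) * (1 - bInd (Dj true true ω))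
    cases hdi : Di true true ω <;> cases hdj : Dj true true ω <;> simp [bInd, hdi, hdj]
  have hcongg : ∀ ω ∈ s,
      (1 - bInd (Di (Zi ω) (Zj ω) ω)) * (1 - bInd (Dj (Zj ω) (Zi ω) ω)) = g ω := by
    intro ω hω
    have h1 : Zi ω = true := hω.1
    have h2 : Zj ω = true := hω.2
    rw [h1, h2]
  -- replace observed integrals (over conditional measure) by f, g
  have hcond_eq1 :
      (∫ ω, (Y (Di (Zi ω) (Zj ω) ω) (Dj (Zj ω) (Zi ω) ω) ω) * (1 - bInd (Di (Zi ω) (Zj ω) ω))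
        * (1 - bInd (Dj (Zj ω) (Zi ω) ω)) ∂(P[|s])) = ∫ ω, f ω ∂(P[|s]) := by
    rw [ProbabilityTheory.cond, integral_smul_measure, integral_smul_measure]
    congr 1
    exact setIntegral_congr_fun hsm hcong
  have hcond_eq2 :
      (∫ ω, (1 - bInd (Di (Zi ω) (Zj ω) ω)) * (1 - bInd (Dj (Zj ω) (Zi ω) ω)) ∂(P[|s]))
        = ∫ ω, g ω ∂(P[|s]) := by
    rw [ProbabilityTheory.cond, integral_smul_measure, integral_smul_measure]
    congr 1
    exact setIntegral_congr_fun hsm hcongg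
  constructor
  · rw [hcond_eq1, hkeyf, hf_eq]
  · rw [hcond_eq2, hkeyg, hg_eq, integral_indicator hNTm]
    simp
    rfl
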